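/- arXiv:1705.05509 — 2 statements merged into one kernel-verified Lean document; each statement's English description precedes it below -/
import Mathlib

section
/- Let n = 4f+1 be an odd prime, let D_0, D_1, D_2, D_3 be the cyclotomic classes of order 4 with respect to a generator α of (Z/nZ)^*, and let s_1,…,s_6 be the six binary sequences of length n with support sets D_0∪D_1, D_0∪D_2, D_0∪D_3, D_1∪D_2, D_1∪D_3, D_2∪D_3. Then for all 1 ≤ i, j ≤ 6 and every k ∈ {0,1,2,3}, the cross-correlation R_{s_i,s_j} is constant on D_k: if τ_1, τ_2 ∈ D_k then R_{s_i,s_j}(τ_1) = R_{s_i,s_j}(τ_2). -/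
/-- Cross-correlation of two sequences of length `N` over `ℤ_H`, with `ξ = exp(2πi/H)`. -/
noncomputable def crossCorr (H N : ℕ) (s t : ZMod N → ZMod H) (τ : ZMod N) : ℂ :=
  ∑ i ∈ Finset.range N,
    Complex.exp (2 * (Real.pi : ℂ) * Complex.I / (H : ℂ)) ^ ((s (i : ZMod N) - t ((i : ZMod N) + τ)).val)

/-- Cross-correlation of two binary sequences of length `N` (an integer). -/
def binCorr (N : ℕ) (s t : ZMod N → ZMod 2) (τ : ZMod N) : ℤ :=
  ∑ i ∈ Finset.range N, (-1 : ℤ) ^ ((s (i : ZMod N) + t ((i : ZMod N) + τ)).val)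

/-- Cross-correlation of two quaternary sequences of length `N`, with `ξ = √-1`. -/
noncomputable def quadCorr (N : ℕ) (s t : ZMod N → ZMod 4) (τ : ZMod N) : ℂ :=
  ∑ i ∈ Finset.range N, Complex.I ^ ((s (i : ZMod N) - t ((i : ZMod N) + τ)).val)

/-- Interleaving `u = I(a, b)`: `u(2i) = a(i)`, `u(2i+1) = b(i)`. -/
def interleaveSeq {H : ℕ} (n : ℕ) (a b : ZMod n → ZMod H) : ZMod (2 * n) → ZMod H :=
  fun k => if k.val % 2 = 0 then a ((k.val / 2 : ℕ) : ZMod n) else b ((k.val / 2 : ℕ) : ZMod n)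

/-- The inverse Gray mapping `φ⁻¹ : ℤ₂ × ℤ₂ → ℤ₄`. -/
def grayInv (a b : ZMod 2) : ZMod 4 :=
  if a = 0 then (if b = 0 then 0 else 1) else (if b = 0 then 3 else 2)

/-- Construction I: the quaternary sequence of length `2n` built from
`a₀, a₁, a₂, a₃` and bits `e₀, e₁, e₂`. -/
def constructionI (n : ℕ) (a0 a1 a2 a3 : ZMod n → ZMod 2)
    (e0 e1 e2 : ZMod 2) : ZMod (2 * n) → ZMod 4 :=
  let lam : ZMod n := (((n + 1) / 2 : ℕ) : ZMod n)
  let c := interleaveSeq n a0 (fun i => e0 + a1 (i + lam))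
  let d := interleaveSeq n (fun i => e1 + a2 i) (fun i => e2 + a3 (i + lam))
  fun i => grayInv (c i) (d i)

/-- The cyclotomic class `D_i` of order 4 w.r.t. the generator `α`. -/
def cycClass (n f : ℕ) (α : ZMod n) (i : ℕ) : Set (ZMod n) :=
  {x | ∃ t < f, x = α ^ (4 * t + i)}

/-- The cyclotomic number `(i, j)` of order 4: `|(D_i + 1) ∩ D_j|`. -/
noncomputable def cycNum (n f : ℕ) (α : ZMod n) (i j : ℕ) : ℕ :=
  Set.ncard {x : ZMod n | x - 1 ∈ cycClass n f α i ∧ x ∈ cycClass n f α j}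

open Classical in
/-- The binary sequence of length `n` with support set `D_i ∪ D_j`. -/
noncomputable def cycSeq (n f : ℕ) (α : ZMod n) (i j : ℕ) : ZMod n → ZMod 2 :=
  fun x => if x ∈ cycClass n f α i ∪ cycClass n f α j then 1 else 0

/-- Six binary sequences with supports `D₀∪D₁, D₀∪D₂, D₀∪D₃, D₁∪D₂, D₁∪D₃, D₂∪D₃`. -/
noncomputable def sixSeq (n f : ℕ) (α : ZMod n) : Fin 6 → ZMod n → ZMod 2
  | 0 => cycSeq n f α 0 1
  | 1 => cycSeq n f α 0 2
  | 2 => cycSeq n f α 0 3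
  | 3 => cycSeq n f α 1 2
  | 4 => cycSeq n f α 1 3
  | 5 => cycSeq n f α 2 3

/-- 16 times the cyclotomic numbers of order 4 in the `f` odd case. -/
def oddTable16 (n x y : ℤ) (i j : ℕ) : ℤ :=
  match i, j with
  | 0, 0 => n - 7 + 2*x
  | 0, 1 => n + 1 + 2*x - 8*y
  | 0, 2 => n + 1 - 6*x
  | 0, 3 => n + 1 + 2*x + 8*y
  | 1, 0 => n - 3 - 2*x
  | 1, 1 => n - 3 - 2*x
  | 1, 2 => n + 1 + 2*x + 8*y
  | 1, 3 => n + 1 + 2*x - 8*y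
  | 2, 0 => n - 7 + 2*x
  | 2, 1 => n - 3 - 2*x
  | 2, 2 => n - 7 + 2*x
  | 2, 3 => n - 3 - 2*x
  | 3, 0 => n - 3 - 2*x
  | 3, 1 => n + 1 + 2*x + 8*y
  | 3, 2 => n + 1 + 2*x - 8*y
  | 3, 3 => n - 3 - 2*x
  | _, _ => 0

/-- 16 times the cyclotomic numbers of order 4 in the `f` even case. -/
def evenTable16 (n x y : ℤ) (i j : ℕ) : ℤ :=
  match i, j with
  | 0, 0 => n - 11 - 6*x
  | 0, 1 => n - 3 + 2*x + 8*y
  | 0, 2 => n - 3 + 2*x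
  | 0, 3 => n - 3 + 2*x - 8*y
  | 1, 0 => n - 3 + 2*x + 8*y
  | 1, 1 => n - 3 + 2*x - 8*y
  | 1, 2 => n + 1 - 2*x
  | 1, 3 => n + 1 - 2*x
  | 2, 0 => n - 3 + 2*x
  | 2, 1 => n + 1 - 2*x
  | 2, 2 => n - 3 + 2*x
  | 2, 3 => n + 1 - 2*x
  | 3, 0 => n - 3 + 2*x - 8*y
  | 3, 1 => n + 1 - 2*x
  | 3, 2 => n + 1 - 2*x
  | 3, 3 => n - 3 + 2*x + 8*y
  | _, _ => 0

section Aux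

variable {n f : ℕ} {α : ZMod n}

private lemma pow_reduce (hord : α ^ (4 * f) = 1) (hf : 0 < f) (e l : ℕ) :
    α ^ (4 * e + l) = α ^ (4 * (e % f) + l) := by
  conv_lhs => rw [← Nat.mod_add_div e f]
  rw [show 4 * (e % f + f * (e / f)) + l = (4 * (e % f) + l) + (4 * f) * (e / f) by ring,
    pow_add, pow_mul, hord, one_pow, mul_one]

private lemma mem_cyc_mul (hord : α ^ (4 * f) = 1) (hf : 0 < f) (m l : ℕ) (x : ZMod n) :
    x ∈ cycClass n f α l ↔ α ^ (4 * m) * x ∈ cycClass n f α l := by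
  have fwd : ∀ (m' : ℕ) (y : ZMod n), y ∈ cycClass n f α l → α ^ (4 * m') * y ∈ cycClass n f α l := by
    rintro m' y ⟨t, ht, rfl⟩
    refine ⟨(m' + t) % f, Nat.mod_lt _ hf, ?_⟩
    rw [← pow_add, show 4 * m' + (4 * t + l) = 4 * (m' + t) + l by ring, pow_reduce hord hf]
  constructor
  · exact fwd m x
  · intro h
    have hm1 : m % f < f := Nat.mod_lt _ hf
    have hdiv : m % f + f * (m / f) = m := Nat.mod_add_div m f
    have h4 : f * (1 + m / f) = f + f * (m / f) := by ring
    have h3 : (f - m % f) + m = f * (1 + m / f) := by omega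
    have hE : 4 * (f - m % f) + 4 * m = 4 * f * (1 + m / f) := by
      have h5 : 4 * f * (1 + m / f) = 4 * (f * (1 + m / f)) := by ring
      omega
    have h2 := fwd (f - m % f) _ h
    rwa [← mul_assoc, ← pow_add, hE, pow_mul, hord, one_pow, one_mul] at h2

private lemma cycSeq_mul (hord : α ^ (4 * f) = 1) (hf : 0 < f) (m a b : ℕ) (x : ZMod n) :
    cycSeq n f α a b (α ^ (4 * m) * x) = cycSeq n f α a b x := by
  classical
  unfold cycSeq
  exact if_congr (by rw [Set.mem_union, Set.mem_union,
    ← mem_cyc_mul hord hf m a x, ← mem_cyc_mul hord hf m b x]) rfl rfl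

private lemma sixSeq_mul (hord : α ^ (4 * f) = 1) (hf : 0 < f) (m : ℕ) (i : Fin 6) (x : ZMod n) :
    sixSeq n f α i (α ^ (4 * m) * x) = sixSeq n f α i x := by
  fin_cases i <;> exact cycSeq_mul hord hf m _ _ x

private lemma binCorr_univ [NeZero n] (s t : ZMod n → ZMod 2) (τ : ZMod n) :
    binCorr n s t τ = ∑ x : ZMod n, (-1 : ℤ) ^ ((s x + t (x + τ)).val) := by
  unfold binCorr
  refine Finset.sum_nbij' (fun i => (i : ZMod n)) (fun x => x.val) ?_ ?_ ?_ ?_ ?_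
  · intro a _; exact Finset.mem_univ _
  · intro a _; exact Finset.mem_range.mpr (ZMod.val_lt a)
  · intro a ha; exact ZMod.val_natCast_of_lt (Finset.mem_range.mp ha)
  · intro a _; exact ZMod.natCast_rightInverse a
  · intro a _; rfl

end Aux

theorem stmt14 (n f : ℕ) (hp : n.Prime) (hnf : n = 4 * f + 1)
    (α : ZMod n) (hα : ∀ z : ZMod n, z ≠ 0 → ∃ k : ℕ, z = α ^ k) :
    ∀ i j : Fin 6, ∀ k < 4, ∀ τ1 ∈ cycClass n f α k, ∀ τ2 ∈ cycClass n f α k,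
      binCorr n (sixSeq n f α i) (sixSeq n f α j) τ1 =
        binCorr n (sixSeq n f α i) (sixSeq n f α j) τ2 := by
  intro i j k _hk τ1 h1 τ2 h2
  haveI : Fact n.Prime := ⟨hp⟩
  have hn1 : 1 < n := hp.one_lt
  have hf : 0 < f := by omega
  have hn5 : 5 ≤ n := by omega
  have hα0 : α ≠ 0 := by
    rintro rfl
    have two_ne : ((2 : ℕ) : ZMod n) ≠ 0 := by
      intro h2
      have := (ZMod.natCast_eq_zero_iff 2 n).mp h2
      have := Nat.le_of_dvd (by norm_num) this
      omega
    obtain ⟨k2, hk2⟩ := hα 2 two_ne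
    cases k2 with
    | zero =>
        rw [pow_zero] at hk2
        have : ((2 : ℕ) : ZMod n) = ((1 : ℕ) : ZMod n) := by exact_mod_cast hk2
        have := (ZMod.natCast_eq_natCast_iff 2 1 n).mp this
        unfold Nat.ModEq at this
        rw [Nat.mod_eq_of_lt (by omega), Nat.mod_eq_of_lt (by omega)] at this
        omega
    | succ m =>
        rw [zero_pow (Nat.succ_ne_zero m)] at hk2
        exact two_ne (by exact_mod_cast hk2)
  have hord : α ^ (4 * f) = 1 := by
    have h := ZMod.pow_card_sub_one_eq_one hα0
    have he : 4 * f = n - 1 := by omega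
    rw [he]; exact h
  obtain ⟨t1, ht1, hτ1⟩ := h1
  obtain ⟨t2, ht2, hτ2⟩ := h2
  have hc : α ^ (4 * (f - t1 + t2)) * τ1 = τ2 := by
    rw [hτ1, hτ2, ← pow_add,
      show 4 * (f - t1 + t2) + (4 * t1 + k) = 4 * f + (4 * t2 + k) by omega,
      pow_add, hord, one_mul]
  have hcne : α ^ (4 * (f - t1 + t2)) ≠ 0 := pow_ne_zero _ hα0
  rw [binCorr_univ, binCorr_univ]
  have key : ∀ x : ZMod n,
      (-1 : ℤ) ^ ((sixSeq n f α i x + sixSeq n f α j (x + τ1)).val)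
        = (-1 : ℤ) ^ ((sixSeq n f α i (α ^ (4 * (f - t1 + t2)) * x)
            + sixSeq n f α j (α ^ (4 * (f - t1 + t2)) * x + τ2)).val) := by
    intro x
    rw [sixSeq_mul hord hf _ i x, ← hc, ← mul_add, sixSeq_mul hord hf _ j (x + τ1)]
  calc (∑ x : ZMod n, (-1 : ℤ) ^ ((sixSeq n f α i x + sixSeq n f α j (x + τ1)).val))
      = ∑ x : ZMod n, (-1 : ℤ) ^ ((sixSeq n f α i (α ^ (4 * (f - t1 + t2)) * x)
          + sixSeq n f α j (α ^ (4 * (f - t1 + t2)) * x + τ2)).val) :=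
        Finset.sum_congr rfl (fun x _ => key x)
    _ = ∑ x : ZMod n, (-1 : ℤ) ^ ((sixSeq n f α i x + sixSeq n f α j (x + τ2)).val) :=
        Fintype.sum_bijective _ (mulLeft_bijective₀ _ hcne) _ _ (fun x => rfl)
end

section
/- Let n = 4f+1 be an odd prime with f even, and suppose there exist integers x, y with n = x² + 4y² such that the cyclotomic numbers of order 4 with respect to the generator α satisfy the f-even table. Let s_3 be the binary sequence of length n with support set D_0∪D_3. Then for every 1 ≤ τ < n: R_{s_3}(τ) = −2y − 3 if τ ∈ D_0, R_{s_3}(τ) = 2y + 1 if τ ∈ D_1, R_{s_3}(τ) = 1 − 2y if τ ∈ D_2, and R_{s_3}(τ) = 2y − 3 if τ ∈ D_3. -/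
section Aux

variable {n f : ℕ} {α : ZMod n}

lemma f_pos (hp : n.Prime) (hnf : n = 4 * f + 1) : 0 < f := by
  rcases Nat.eq_zero_or_pos f with h | h
  · subst h; norm_num at hnf; subst hnf; exact absurd hp (by norm_num)
  · exact h

lemma alpha_ne_zero (hp : n.Prime) (hnf : n = 4 * f + 1)
    (hα : ∀ z : ZMod n, z ≠ 0 → ∃ k : ℕ, z = α ^ k) : α ≠ 0 := by
  haveI := Fact.mk hp
  have hf := f_pos hp hnf
  intro h0
  have hm1 : (-1 : ZMod n) ≠ 0 := by
    simp only [ne_eq, neg_eq_zero]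
    exact one_ne_zero
  obtain ⟨k, hk⟩ := hα (-1) hm1
  rcases Nat.eq_zero_or_pos k with hk0 | hk0
  · subst hk0
    simp only [pow_zero] at hk
    have h2 : (2 : ZMod n) = 0 := by linear_combination -hk
    have h3 : (n : ℕ) ∣ 2 := (CharP.cast_eq_zero_iff (ZMod n) n 2).mp (by exact_mod_cast h2)
    have := Nat.le_of_dvd (by norm_num) h3
    omega
  · rw [h0, zero_pow hk0.ne'] at hk
    exact hm1 hk

lemma order_alpha (hp : n.Prime) (hnf : n = 4 * f + 1)
    (hα : ∀ z : ZMod n, z ≠ 0 → ∃ k : ℕ, z = α ^ k) : orderOf α = 4 * f := by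
  haveI := Fact.mk hp
  haveI : NeZero n := ⟨hp.pos.ne'⟩
  have hα0 := alpha_ne_zero hp hnf hα
  have h1 : α ^ (4 * f) = 1 := by
    have := ZMod.pow_card_sub_one_eq_one hα0
    rwa [show n - 1 = 4 * f by omega] at this
  have hdvd : orderOf α ∣ 4 * f := orderOf_dvd_of_pow_eq_one h1
  have hf := f_pos hp hnf
  have hr0 : 0 < orderOf α := by
    rcases Nat.eq_zero_or_pos (orderOf α) with h | h
    · rw [h] at hdvd
      exact absurd (Nat.eq_zero_of_zero_dvd hdvd) (by omega)
    · exact h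
  have hsub : (Finset.univ.filter (fun z : ZMod n => z ≠ 0)) ⊆
      (Finset.range (orderOf α)).image (fun k => α ^ k) := by
    intro z hz
    simp only [Finset.mem_filter, Finset.mem_univ, true_and] at hz
    obtain ⟨k, hk⟩ := hα z hz
    simp only [Finset.mem_image, Finset.mem_range]
    exact ⟨k % orderOf α, Nat.mod_lt _ hr0, by rw [pow_mod_orderOf]; exact hk.symm⟩
  have hcard1 : (Finset.univ.filter (fun z : ZMod n => z ≠ 0)).card = n - 1 := by
    have h2 : (Finset.univ.filter (fun z : ZMod n => z = 0)) = {0} := by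
      ext z; simp
    have h3 := Finset.card_filter_add_card_filter_not
      (s := (Finset.univ : Finset (ZMod n))) (p := fun z => z = 0)
    simp only [h2, Finset.card_singleton, Finset.card_univ, ZMod.card] at h3
    have h4 : Finset.filter (fun z : ZMod n => z ≠ 0) Finset.univ
        = Finset.filter (fun a : ZMod n => ¬ a = 0) Finset.univ := by
      apply Finset.filter_congr; intro z _; simp
    rw [h4]
    omega
  have hle : n - 1 ≤ orderOf α := by
    calc n - 1 = _ := hcard1.symm
    _ ≤ ((Finset.range (orderOf α)).image (fun k => α ^ k)).card := Finset.card_le_card hsub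
    _ ≤ (Finset.range (orderOf α)).card := Finset.card_image_le
    _ = orderOf α := Finset.card_range _
  have := Nat.le_of_dvd (by omega) hdvd
  omega

lemma cycPow_mem (hord : orderOf α = 4 * f) (hf : 0 < f) (m : ℕ) :
    α ^ m ∈ cycClass n f α (m % 4) := by
  have hq : 4 * ((m % (4 * f)) / 4) + m % 4 = m % (4 * f) := by
    have h1 : m % (4 * f) % 4 = m % 4 := Nat.mod_mod_of_dvd m ⟨f, rfl⟩
    have h2 : 4 * ((m % (4 * f)) / 4) + (m % (4 * f)) % 4 = m % (4 * f) := by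
      omega
    omega
  refine ⟨(m % (4 * f)) / 4, ?_, ?_⟩
  · have := Nat.mod_lt m (show 0 < 4 * f by omega)
    omega
  · rw [hq, ← hord, pow_mod_orderOf]

lemma pow_eq_imp (hp : n.Prime) (hα0 : α ≠ 0) {a b : ℕ} (h : α ^ a = α ^ b) :
    a % orderOf α = b % orderOf α := by
  haveI := Fact.mk hp
  wlog hab : a ≤ b generalizing a b
  · exact (this h.symm (by omega)).symm
  have h2 : α ^ a * α ^ (b - a) = α ^ a * 1 := by
    rw [mul_one, ← pow_add, Nat.add_sub_cancel' hab]
    exact h.symm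
  have h3 : α ^ (b - a) = 1 := mul_left_cancel₀ (pow_ne_zero a hα0) h2
  exact (Nat.modEq_iff_dvd' hab).mpr (orderOf_dvd_of_pow_eq_one h3)

lemma mem_imp_eq (hp : n.Prime) (hord : orderOf α = 4 * f) (hα0 : α ≠ 0)
    {i j : ℕ} (hi : i < 4) (hj : j < 4) {z : ZMod n}
    (h1 : z ∈ cycClass n f α i) (h2 : z ∈ cycClass n f α j) : i = j := by
  obtain ⟨t, ht, rfl⟩ := h1
  obtain ⟨s, hs, he⟩ := h2
  have hmod := pow_eq_imp hp hα0 he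
  rw [hord] at hmod
  have e1 : (4 * t + i) % (4 * f) % 4 = (4 * t + i) % 4 :=
    Nat.mod_mod_of_dvd _ ⟨f, rfl⟩
  have e2 : (4 * s + j) % (4 * f) % 4 = (4 * s + j) % 4 :=
    Nat.mod_mod_of_dvd _ ⟨f, rfl⟩
  have e3 : (4 * t + i) % 4 = (4 * s + j) % 4 := by rw [← e1, ← e2, hmod]
  omega

lemma mem_ne_zero (hp : n.Prime) (hα0 : α ≠ 0) {i : ℕ} {z : ZMod n}
    (h : z ∈ cycClass n f α i) : z ≠ 0 := by
  haveI := Fact.mk hp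
  obtain ⟨t, _, rfl⟩ := h
  exact pow_ne_zero _ hα0

lemma mem_of_ne_zero (hord : orderOf α = 4 * f) (hf : 0 < f)
    (hα : ∀ z : ZMod n, z ≠ 0 → ∃ k : ℕ, z = α ^ k) {z : ZMod n} (hz : z ≠ 0) :
    ∃ b < 4, z ∈ cycClass n f α b := by
  obtain ⟨k, rfl⟩ := hα z hz
  exact ⟨k % 4, Nat.mod_lt _ (by norm_num), cycPow_mem hord hf k⟩

lemma mul_mem (hord : orderOf α = 4 * f) (hf : 0 < f)
    {i k : ℕ} (hi : i < 4) (hk : k < 4) {z τ : ZMod n}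
    (hz : z ∈ cycClass n f α i) (hτ : τ ∈ cycClass n f α k) :
    z * τ ∈ cycClass n f α ((i + k) % 4) := by
  obtain ⟨t, ht, rfl⟩ := hz
  obtain ⟨s, hs, rfl⟩ := hτ
  have := cycPow_mem hord hf (4 * t + i + (4 * s + k))
  rw [show (4 * t + i + (4 * s + k)) % 4 = (i + k) % 4 by omega, pow_add] at this
  exact this

lemma mul_tau_iff (hp : n.Prime) (hord : orderOf α = 4 * f) (hf : 0 < f)
    (hα0 : α ≠ 0) (hα : ∀ z : ZMod n, z ≠ 0 → ∃ k : ℕ, z = α ^ k)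
    {i k : ℕ} (hi : i < 4) (hk : k < 4) {w τ : ZMod n}
    (hτ : τ ∈ cycClass n f α k) :
    w ∈ cycClass n f α i ↔ w * τ ∈ cycClass n f α ((i + k) % 4) := by
  haveI := Fact.mk hp
  constructor
  · exact fun hw => mul_mem hord hf hi hk hw hτ
  · intro hw
    have hw0 : w ≠ 0 := left_ne_zero_of_mul (mem_ne_zero hp hα0 hw)
    obtain ⟨b, hb, hwb⟩ := mem_of_ne_zero hord hf hα hw0
    have := mul_mem hord hf hb hk hwb hτ
    have heq := mem_imp_eq hp hord hα0 (Nat.mod_lt _ (by norm_num))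
      (Nat.mod_lt _ (by norm_num)) this hw
    have : b = i := by omega
    rwa [this] at hwb

lemma ncard_class (hp : n.Prime) (hord : orderOf α = 4 * f) (hf : 0 < f)
    (hα0 : α ≠ 0) {i : ℕ} (hi : i < 4) : (cycClass n f α i).ncard = f := by
  have hset : cycClass n f α i = (fun t => α ^ (4 * t + i)) '' ↑(Finset.range f) := by
    ext z
    simp only [cycClass, Set.mem_setOf_eq, Set.mem_image, Finset.coe_range, Set.mem_Iio]
    constructor
    · rintro ⟨t, ht, rfl⟩; exact ⟨t, ht, rfl⟩
    · rintro ⟨t, ht, rfl⟩; exact ⟨t, ht, rfl⟩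
  rw [hset, Set.ncard_image_of_injOn, Set.ncard_coe_finset, Finset.card_range]
  intro t ht s hs he
  simp only [Finset.coe_range, Set.mem_Iio] at ht hs
  have := pow_eq_imp hp hα0 he
  rw [hord] at this
  rw [Nat.mod_eq_of_lt (by omega), Nat.mod_eq_of_lt (by omega)] at this
  omega

lemma count_shift (hp : n.Prime) (hnf : n = 4 * f + 1)
    (hα : ∀ z : ZMod n, z ≠ 0 → ∃ k : ℕ, z = α ^ k)
    {k : ℕ} (hk : k < 4) {τ : ZMod n} (hτ : τ ∈ cycClass n f α k)
    {i j : ℕ} (hi : i < 4) (hj : j < 4) :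
    {z : ZMod n | z ∈ cycClass n f α ((i + k) % 4) ∧
        z + τ ∈ cycClass n f α ((j + k) % 4)}.ncard = cycNum n f α i j := by
  haveI := Fact.mk hp
  have hα0 := alpha_ne_zero hp hnf hα
  have hord := order_alpha hp hnf hα
  have hf := f_pos hp hnf
  have hτ0 : τ ≠ 0 := mem_ne_zero hp hα0 hτ
  have key : {x : ZMod n | x - 1 ∈ cycClass n f α i ∧ x ∈ cycClass n f α j}
      = (fun z => z * τ⁻¹ + 1) '' {z : ZMod n | z ∈ cycClass n f α ((i + k) % 4) ∧
        z + τ ∈ cycClass n f α ((j + k) % 4)} := by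
    ext w
    simp only [Set.mem_image, Set.mem_setOf_eq]
    constructor
    · rintro ⟨hx1, hx2⟩
      refine ⟨(w - 1) * τ, ⟨mul_mem hord hf hi hk hx1 hτ, ?_⟩, ?_⟩
      · rw [show (w - 1) * τ + τ = w * τ by ring]
        exact mul_mem hord hf hj hk hx2 hτ
      · field_simp
        ring
    · rintro ⟨z, ⟨hz1, hz2⟩, rfl⟩
      constructor
      · rw [show z * τ⁻¹ + 1 - 1 = z * τ⁻¹ by ring]
        refine (mul_tau_iff hp hord hf hα0 hα hi hk hτ).mpr ?_
        rwa [inv_mul_cancel_right₀ hτ0]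
      · rw [show z * τ⁻¹ + 1 = (z + τ) * τ⁻¹ by field_simp]
        refine (mul_tau_iff hp hord hf hα0 hα hj hk hτ).mpr ?_
        rwa [inv_mul_cancel_right₀ hτ0]
  have hinj : Function.Injective (fun z : ZMod n => z * τ⁻¹ + 1) := by
    intro a b h
    simp only [add_left_inj] at h
    exact mul_right_cancel₀ (inv_ne_zero hτ0) h
  rw [cycNum, key, Set.ncard_image_of_injective _ hinj]

lemma filter_card_eq_ncard [NeZero n] (p : ZMod n → Prop) [DecidablePred p] :
    (Finset.univ.filter p).card = {z : ZMod n | p z}.ncard := by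
  rw [← Set.ncard_coe_finset]
  congr 1
  ext z
  simp


lemma corr_formula (hp : n.Prime) (hnf : n = 4 * f + 1)
    (hα : ∀ z : ZMod n, z ≠ 0 → ∃ k : ℕ, z = α ^ k)
    {k : ℕ} (hk : k < 4) {τ : ZMod n} (hτ : τ ∈ cycClass n f α k) :
    binCorr n (cycSeq n f α 0 3) (cycSeq n f α 0 3) τ =
      (n : ℤ) - 8 * f + 4 * ((cycNum n f α ((4 - k) % 4) ((4 - k) % 4) : ℤ)
        + (cycNum n f α ((4 - k) % 4) ((7 - k) % 4) : ℤ)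
        + (cycNum n f α ((7 - k) % 4) ((4 - k) % 4) : ℤ)
        + (cycNum n f α ((7 - k) % 4) ((7 - k) % 4) : ℤ)) := by
  classical
  haveI := Fact.mk hp
  haveI : NeZero n := ⟨hp.pos.ne'⟩
  have hα0 := alpha_ne_zero hp hnf hα
  have hord := order_alpha hp hnf hα
  have hf := f_pos hp hnf
  set P : ZMod n → Prop :=
    fun z => z ∈ cycClass n f α 0 ∪ cycClass n f α 3 with hP
  set Q : ZMod n → Prop := fun z => P (z + τ) with hQ
  -- Step 1: sum over ZMod n
  have hstep1 : binCorr n (cycSeq n f α 0 3) (cycSeq n f α 0 3) τ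
      = ∑ z : ZMod n, (if P z ↔ Q z then (1 : ℤ) else -1) := by
    rw [binCorr]
    refine Finset.sum_nbij' (i := fun m : ℕ => (m : ZMod n))
      (j := fun z : ZMod n => z.val) ?_ ?_ ?_ ?_ ?_
    · intro a _; exact Finset.mem_univ _
    · intro z _; exact Finset.mem_range.mpr (ZMod.val_lt z)
    · intro a ha; exact ZMod.val_cast_of_lt (Finset.mem_range.mp ha)
    · intro z _; exact ZMod.natCast_rightInverse z
    · intro a _
      show (-1 : ℤ) ^ ((cycSeq n f α 0 3 (a : ZMod n)
            + cycSeq n f α 0 3 ((a : ZMod n) + τ)).val)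
          = if P (a : ZMod n) ↔ Q (a : ZMod n) then 1 else -1
      by_cases h1 : P (a : ZMod n) <;> by_cases h2 : Q (a : ZMod n)
      · rw [if_pos (iff_of_true h1 h2)]
        simp only [hP, hQ] at h1 h2
        simp only [cycSeq]
        rw [if_pos h1, if_pos h2]
        decide
      · rw [if_neg (fun hiff => h2 (hiff.mp h1))]
        simp only [hP, hQ] at h1 h2
        simp only [cycSeq]
        rw [if_pos h1, if_neg h2]
        decide
      · rw [if_neg (fun hiff => h1 (hiff.mpr h2))]
        simp only [hP, hQ] at h1 h2
        simp only [cycSeq]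
        rw [if_neg h1, if_pos h2]
        decide
      · rw [if_pos (iff_of_false h1 h2)]
        simp only [hP, hQ] at h1 h2
        simp only [cycSeq]
        rw [if_neg h1, if_neg h2]
        decide
  -- Step 2: to cardinalities
  have hstep2 : ∑ z : ZMod n, (if P z ↔ Q z then (1 : ℤ) else -1)
      = (n : ℤ) - 2 * ((Finset.univ.filter fun z => ¬(P z ↔ Q z)).card : ℤ) := by
    have hterm : ∀ z : ZMod n, (if P z ↔ Q z then (1 : ℤ) else -1)
        = 1 - 2 * (if ¬(P z ↔ Q z) then (1 : ℤ) else 0) := by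
      intro z; by_cases h : P z ↔ Q z <;> simp [h]
    simp_rw [hterm]
    rw [Finset.sum_sub_distrib, ← Finset.mul_sum, Finset.sum_boole, Finset.sum_const,
      Finset.card_univ, ZMod.card]
    push_cast
    ring
  -- cardinal bookkeeping
  have hMsplit : (Finset.univ.filter fun z => ¬(P z ↔ Q z)).card
      = (Finset.univ.filter fun z => P z ∧ ¬ Q z).card
        + (Finset.univ.filter fun z => ¬ P z ∧ Q z).card := by
    have he : (Finset.univ.filter fun z => ¬(P z ↔ Q z))
        = (Finset.univ.filter fun z : ZMod n => (P z ∧ ¬ Q z) ∨ (¬ P z ∧ Q z)) :=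
      Finset.filter_congr (fun z _ => by tauto)
    rw [he, Finset.filter_or]
    exact Finset.card_union_of_disjoint (by
      rw [Finset.disjoint_left]
      intro a ha hb
      simp only [Finset.mem_filter] at ha hb
      tauto)
  have hsplit1 : (Finset.univ.filter fun z => P z ∧ Q z).card
      + (Finset.univ.filter fun z => P z ∧ ¬ Q z).card
      = (Finset.univ.filter fun z => P z).card := by
    rw [← Finset.filter_filter, ← Finset.filter_filter]
    exact Finset.card_filter_add_card_filter_not (fun z => Q z)
  have hsplit2 : (Finset.univ.filter fun z => P z ∧ Q z).card
      + (Finset.univ.filter fun z => ¬ P z ∧ Q z).card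
      = (Finset.univ.filter fun z => Q z).card := by
    have e1 : (Finset.univ.filter fun z => P z ∧ Q z)
        = Finset.univ.filter fun z : ZMod n => Q z ∧ P z :=
      Finset.filter_congr (fun z _ => by tauto)
    have e2 : (Finset.univ.filter fun z => ¬ P z ∧ Q z)
        = Finset.univ.filter fun z : ZMod n => Q z ∧ ¬ P z :=
      Finset.filter_congr (fun z _ => by tauto)
    rw [e1, e2, ← Finset.filter_filter, ← Finset.filter_filter]
    exact Finset.card_filter_add_card_filter_not (fun z => P z)
  have hQP : (Finset.univ.filter fun z => Q z).card
      = (Finset.univ.filter fun z => P z).card := by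
    apply Finset.card_nbij (fun z => z + τ)
    · intro a ha
      simp only [Finset.mem_coe, Finset.mem_filter, Finset.mem_univ, true_and] at ha ⊢
      exact ha
    · intro a ha b hb hab
      simpa using hab
    · intro b hb
      simp only [Finset.coe_filter, Set.mem_setOf_eq, Finset.mem_univ, true_and] at hb
      refine ⟨b - τ, ?_, by ring⟩
      simp only [Finset.mem_coe, Finset.mem_filter, Finset.mem_univ, true_and, hQ]
      rwa [sub_add_cancel]
  have hPcard : (Finset.univ.filter fun z => P z).card = 2 * f := by
    have e1 : (Finset.univ.filter fun z => P z)
        = (Finset.univ.filter fun z => z ∈ cycClass n f α 0)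
          ∪ (Finset.univ.filter fun z => z ∈ cycClass n f α 3) := by
      rw [← Finset.filter_or]
      exact Finset.filter_congr (fun z _ => by simp [hP])
    rw [e1, Finset.card_union_of_disjoint (by
      rw [Finset.disjoint_left]
      intro a ha hb
      simp only [Finset.mem_filter, Finset.mem_univ, true_and] at ha hb
      exact absurd (mem_imp_eq hp hord hα0 (by norm_num) (by norm_num) ha hb) (by norm_num)),
      filter_card_eq_ncard, filter_card_eq_ncard]
    have c0 : {z : ZMod n | z ∈ cycClass n f α 0}.ncard = f :=
      ncard_class hp hord hf hα0 (by norm_num)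
    have c3 : {z : ZMod n | z ∈ cycClass n f α 3}.ncard = f :=
      ncard_class hp hord hf hα0 (by norm_num)
    rw [c0, c3]; ring
  -- the intersection count
  have e0 : ((4 - k) % 4 + k) % 4 = 0 := by omega
  have e3 : ((7 - k) % 4 + k) % 4 = 3 := by omega
  have h44 : (4 - k) % 4 < 4 := by omega
  have h74 : (7 - k) % 4 < 4 := by omega
  have hNij : ∀ i j : ℕ, i < 4 → j < 4 →
      (Finset.univ.filter fun z : ZMod n =>
        z ∈ cycClass n f α ((i + k) % 4) ∧ z + τ ∈ cycClass n f α ((j + k) % 4)).card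
      = cycNum n f α i j := by
    intro i j hi hj
    rw [filter_card_eq_ncard]
    exact count_shift hp hnf hα hk hτ hi hj
  have hAcard : (Finset.univ.filter fun z => P z ∧ Q z).card
      = cycNum n f α ((4 - k) % 4) ((4 - k) % 4) + cycNum n f α ((4 - k) % 4) ((7 - k) % 4)
        + cycNum n f α ((7 - k) % 4) ((4 - k) % 4)
        + cycNum n f α ((7 - k) % 4) ((7 - k) % 4) := by
    have hdisj : ∀ (i j i' j' : ℕ), i < 4 → j < 4 → i' < 4 → j' < 4 → (i ≠ i' ∨ j ≠ j') →
        Disjoint (Finset.univ.filter fun z : ZMod n =>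
            z ∈ cycClass n f α i ∧ z + τ ∈ cycClass n f α j)
          (Finset.univ.filter fun z : ZMod n =>
            z ∈ cycClass n f α i' ∧ z + τ ∈ cycClass n f α j') := by
      intro i j i' j' hi hj hi' hj' hne
      rw [Finset.disjoint_left]
      intro a ha hb
      simp only [Finset.mem_filter, Finset.mem_univ, true_and] at ha hb
      rcases hne with hne | hne
      · exact hne (mem_imp_eq hp hord hα0 hi hi' ha.1 hb.1)
      · exact hne (mem_imp_eq hp hord hα0 hj hj' ha.2 hb.2)
    have epre : (Finset.univ.filter fun z => P z ∧ Q z)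
        = ((Finset.univ.filter fun z : ZMod n =>
              z ∈ cycClass n f α 0 ∧ z + τ ∈ cycClass n f α 0)
          ∪ (Finset.univ.filter fun z : ZMod n =>
              z ∈ cycClass n f α 0 ∧ z + τ ∈ cycClass n f α 3))
          ∪ ((Finset.univ.filter fun z : ZMod n =>
              z ∈ cycClass n f α 3 ∧ z + τ ∈ cycClass n f α 0)
          ∪ (Finset.univ.filter fun z : ZMod n =>
              z ∈ cycClass n f α 3 ∧ z + τ ∈ cycClass n f α 3)) := by
      rw [← Finset.filter_or, ← Finset.filter_or, ← Finset.filter_or]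
      refine Finset.filter_congr (fun z _ => ?_)
      simp only [hP, hQ, Set.mem_union]
      tauto
    rw [epre, Finset.card_union_of_disjoint, Finset.card_union_of_disjoint,
      Finset.card_union_of_disjoint]
    · have r00 := hNij ((4-k)%4) ((4-k)%4) h44 h44
      have r03 := hNij ((4-k)%4) ((7-k)%4) h44 h74
      have r30 := hNij ((7-k)%4) ((4-k)%4) h74 h44
      have r33 := hNij ((7-k)%4) ((7-k)%4) h74 h74
      rw [e0] at r00
      rw [e0, e3] at r03
      rw [e0, e3] at r30
      rw [e3] at r33
      omega
    · exact hdisj 3 0 3 3 (by norm_num) (by norm_num) (by norm_num) (by norm_num) (Or.inr (by norm_num))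
    · exact hdisj 0 0 0 3 (by norm_num) (by norm_num) (by norm_num) (by norm_num) (Or.inr (by norm_num))
    · rw [Finset.disjoint_union_left, Finset.disjoint_union_right,
        Finset.disjoint_union_right]
      refine ⟨⟨?_, ?_⟩, ?_, ?_⟩ <;>
        first
        | exact hdisj 0 0 3 0 (by norm_num) (by norm_num) (by norm_num) (by norm_num) (Or.inl (by norm_num))
        | exact hdisj 0 0 3 3 (by norm_num) (by norm_num) (by norm_num) (by norm_num) (Or.inl (by norm_num))
        | exact hdisj 0 3 3 0 (by norm_num) (by norm_num) (by norm_num) (by norm_num) (Or.inl (by norm_num))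
        | exact hdisj 0 3 3 3 (by norm_num) (by norm_num) (by norm_num) (by norm_num) (Or.inl (by norm_num))
  -- assemble
  rw [hstep1, hstep2]
  have hnat : (Finset.univ.filter fun z => ¬(P z ↔ Q z)).card + 2 *
      (Finset.univ.filter fun z => P z ∧ Q z).card = 4 * f := by omega
  have hc : ((Finset.univ.filter fun z => ¬(P z ↔ Q z)).card : ℤ)
      = 4 * f - 2 * ((Finset.univ.filter fun z => P z ∧ Q z).card : ℤ) := by
    have := hnat; push_cast at this ⊢; linarith
  rw [hc, hAcard]
  push_cast
  ring

end Aux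

theorem stmt18 (n f : ℕ) (hp : n.Prime) (hnf : n = 4 * f + 1) (hf : Even f)
    (x y : ℤ) (hxy : (n : ℤ) = x ^ 2 + 4 * y ^ 2)
    (α : ZMod n) (hα : ∀ z : ZMod n, z ≠ 0 → ∃ k : ℕ, z = α ^ k)
    (hTab : ∀ i < 4, ∀ j < 4, 16 * (cycNum n f α i j : ℤ) = evenTable16 (n : ℤ) x y i j) :
    ∀ τ : ℕ, 1 ≤ τ → τ < n →
      (((τ : ZMod n) ∈ cycClass n f α 0) →
        binCorr n (cycSeq n f α 0 3) (cycSeq n f α 0 3) (τ : ZMod n) = -2 * y - 3) ∧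
      (((τ : ZMod n) ∈ cycClass n f α 1) →
        binCorr n (cycSeq n f α 0 3) (cycSeq n f α 0 3) (τ : ZMod n) = 2 * y + 1) ∧
      (((τ : ZMod n) ∈ cycClass n f α 2) →
        binCorr n (cycSeq n f α 0 3) (cycSeq n f α 0 3) (τ : ZMod n) = 1 - 2 * y) ∧
      (((τ : ZMod n) ∈ cycClass n f α 3) →
        binCorr n (cycSeq n f α 0 3) (cycSeq n f α 0 3) (τ : ZMod n) = 2 * y - 3) := by
  intro τ hτ1 hτ2
  have hn : (n : ℤ) = 4 * (f : ℤ) + 1 := by exact_mod_cast congrArg (Nat.cast : ℕ → ℤ) hnf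
  refine ⟨?_, ?_, ?_, ?_⟩ <;> intro hmem
  · have h := corr_formula hp hnf hα (show (0:ℕ) < 4 by norm_num) hmem
    rw [show (4 - (0:ℕ)) % 4 = 0 by norm_num, show (7 - (0:ℕ)) % 4 = 3 by norm_num] at h
    have t1 : 16 * (cycNum n f α 0 0 : ℤ) = (n:ℤ) - 11 - 6*x := by
      rw [hTab 0 (by norm_num) 0 (by norm_num)]
      rfl
    have t2 : 16 * (cycNum n f α 0 3 : ℤ) = (n:ℤ) - 3 + 2*x - 8*y := by
      rw [hTab 0 (by norm_num) 3 (by norm_num)]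
      rfl
    have t3 : 16 * (cycNum n f α 3 0 : ℤ) = (n:ℤ) - 3 + 2*x - 8*y := by
      rw [hTab 3 (by norm_num) 0 (by norm_num)]
      rfl
    have t4 : 16 * (cycNum n f α 3 3 : ℤ) = (n:ℤ) - 3 + 2*x + 8*y := by
      rw [hTab 3 (by norm_num) 3 (by norm_num)]
      rfl
    rw [h]; linarith
  · have h := corr_formula hp hnf hα (show (1:ℕ) < 4 by norm_num) hmem
    rw [show (4 - (1:ℕ)) % 4 = 3 by norm_num, show (7 - (1:ℕ)) % 4 = 2 by norm_num] at h
    have t1 : 16 * (cycNum n f α 3 3 : ℤ) = (n:ℤ) - 3 + 2*x + 8*y := by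
      rw [hTab 3 (by norm_num) 3 (by norm_num)]
      rfl
    have t2 : 16 * (cycNum n f α 3 2 : ℤ) = (n:ℤ) + 1 - 2*x := by
      rw [hTab 3 (by norm_num) 2 (by norm_num)]
      rfl
    have t3 : 16 * (cycNum n f α 2 3 : ℤ) = (n:ℤ) + 1 - 2*x := by
      rw [hTab 2 (by norm_num) 3 (by norm_num)]
      rfl
    have t4 : 16 * (cycNum n f α 2 2 : ℤ) = (n:ℤ) - 3 + 2*x := by
      rw [hTab 2 (by norm_num) 2 (by norm_num)]
      rfl
    rw [h]; linarith
  · have h := corr_formula hp hnf hα (show (2:ℕ) < 4 by norm_num) hmem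
    rw [show (4 - (2:ℕ)) % 4 = 2 by norm_num, show (7 - (2:ℕ)) % 4 = 1 by norm_num] at h
    have t1 : 16 * (cycNum n f α 2 2 : ℤ) = (n:ℤ) - 3 + 2*x := by
      rw [hTab 2 (by norm_num) 2 (by norm_num)]
      rfl
    have t2 : 16 * (cycNum n f α 2 1 : ℤ) = (n:ℤ) + 1 - 2*x := by
      rw [hTab 2 (by norm_num) 1 (by norm_num)]
      rfl
    have t3 : 16 * (cycNum n f α 1 2 : ℤ) = (n:ℤ) + 1 - 2*x := by
      rw [hTab 1 (by norm_num) 2 (by norm_num)]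
      rfl
    have t4 : 16 * (cycNum n f α 1 1 : ℤ) = (n:ℤ) - 3 + 2*x - 8*y := by
      rw [hTab 1 (by norm_num) 1 (by norm_num)]
      rfl
    rw [h]; linarith
  · have h := corr_formula hp hnf hα (show (3:ℕ) < 4 by norm_num) hmem
    rw [show (4 - (3:ℕ)) % 4 = 1 by norm_num, show (7 - (3:ℕ)) % 4 = 0 by norm_num] at h
    have t1 : 16 * (cycNum n f α 1 1 : ℤ) = (n:ℤ) - 3 + 2*x - 8*y := by
      rw [hTab 1 (by norm_num) 1 (by norm_num)]
      rfl
    have t2 : 16 * (cycNum n f α 1 0 : ℤ) = (n:ℤ) - 3 + 2*x + 8*y := by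
      rw [hTab 1 (by norm_num) 0 (by norm_num)]
      rfl
    have t3 : 16 * (cycNum n f α 0 1 : ℤ) = (n:ℤ) - 3 + 2*x + 8*y := by
      rw [hTab 0 (by norm_num) 1 (by norm_num)]
      rfl
    have t4 : 16 * (cycNum n f α 0 0 : ℤ) = (n:ℤ) - 11 - 6*x := by
      rw [hTab 0 (by norm_num) 0 (by norm_num)]
      rfl
    rw [h]; linarith
end
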